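/- Let α1, α2 ∈ [0,1] and β1, β2 ≥ 0 with βi² ≤ αi(1−αi) for i = 1, 2, and define ρ1 = [[1,0],[0,0]] ⊗ [[1,0],[0,0]] and ρ2 = [[1−α1, β1],[β1, α1]] ⊗ [[1−α2, β2],[β2, α2]] on ℂ² ⊗ ℂ². If ρ1 and ρ2 are perfectly distinguishable in SEP, then α1 + α2 ≥ 1. -/

import Mathlib

open Matrix Kronecker ComplexOrder

noncomputable section

def outer (v : Fin 2 → ℂ) : Matrix (Fin 2) (Fin 2) ℂ := Matrix.of fun i j => v i * star (v j)

lemma outer_psd (v : Fin 2 → ℂ) : (outer v).PosSemidef := by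
  rw [Matrix.posSemidef_iff_dotProduct_mulVec]
  constructor
  · ext i j; simp [outer, Matrix.conjTranspose_apply, mul_comm]
  · intro x
    have h : star x ⬝ᵥ (outer v).mulVec x
        = star (∑ j, star (v j) * x j) * (∑ j, star (v j) * x j) := by
      simp [outer, dotProduct, Matrix.mulVec, Fin.sum_univ_two]; ring
    rw [h]; exact star_mul_self_nonneg _

lemma sigma_psd (a b : ℝ) (ha0 : 0 ≤ a) (ha1 : a ≤ 1) (hb : b ^ 2 ≤ a * (1 - a)) :
    (!![((1 - a : ℝ) : ℂ), (b : ℝ); (b : ℝ), (a : ℝ)]).PosSemidef := by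
  rw [Matrix.posSemidef_iff_dotProduct_mulVec]
  constructor
  · ext i j
    fin_cases i <;> fin_cases j <;> simp [Matrix.conjTranspose_apply]
  · intro x
    rw [Complex.le_def]
    constructor
    · simp [dotProduct, Matrix.mulVec, Fin.sum_univ_two, Complex.add_re, Complex.mul_re]
      nlinarith [sq_nonneg ((1-a) * (x 0).re + b * (x 1).re), sq_nonneg ((1-a) * (x 0).im + b * (x 1).im),
        sq_nonneg (a * (x 1).re + b * (x 0).re), sq_nonneg (a * (x 1).im + b * (x 0).im),
        sq_nonneg ((x 0).re), sq_nonneg ((x 0).im), sq_nonneg ((x 1).re), sq_nonneg ((x 1).im)]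
    · simp [dotProduct, Matrix.mulVec, Fin.sum_univ_two, Complex.add_im, Complex.mul_im]
      ring

lemma quad_aux {x y c : ℝ} (hc : 0 ≤ c) (hy : 0 ≤ y)
    (h : ∀ s : ℝ, 0 ≤ x - 2 * s * c + s ^ 2 * c * y) : c ≤ x * y := by
  rcases eq_or_lt_of_le hc with h0 | hc'
  · have hx := h 0
    simp at hx
    nlinarith [mul_nonneg hx hy]
  · rcases eq_or_lt_of_le hy with h0 | hy'
    · exfalso
      have hs := h ((x + 1) / (2 * c))
      rw [← h0] at hs
      have hc2 : 2 * ((x + 1) / (2 * c)) * c = x + 1 := by field_simp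
      nlinarith [hs, sq_nonneg ((x+1)/(2*c))]
    · have hs := h (1 / y)
      have h1 : 2 * (1 / y) * c = 2 * (c / y) := by field_simp
      have h2 : (1 / y) ^ 2 * c * y = c / y := by field_simp
      rw [h1, h2] at hs
      have h3 : c / y ≤ x := by linarith
      calc c = (c / y) * y := by field_simp
      _ ≤ x * y := by nlinarith


abbrev Mat (dA dB : ℕ) := Matrix (Fin dA × Fin dB) (Fin dA × Fin dB) ℂ

/-- Membership in the dual cone SEP*. -/
def InSEPDual {dA dB : ℕ} (M : Mat dA dB) : Prop :=
  M.IsHermitian ∧ ∀ (A : Matrix (Fin dA) (Fin dA) ℂ) (B : Matrix (Fin dB) (Fin dB) ℂ),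
    A.PosSemidef → B.PosSemidef → 0 ≤ ((A ⊗ₖ B) * M).trace

/-- Perfect distinguishability of two states in SEP. -/
def PerfDistSEP {dA dB : ℕ} (ρ1 ρ2 : Mat dA dB) : Prop :=
  ∃ M1 M2 : Mat dA dB, InSEPDual M1 ∧ InSEPDual M2 ∧ M1 + M2 = 1 ∧
    (M1 * ρ1).trace = 1 ∧ (M2 * ρ2).trace = 1 ∧ (M2 * ρ1).trace = 0 ∧ (M1 * ρ2).trace = 0

attribute [local simp] Prod.mk_zero_zero Prod.mk_one_one

set_option maxHeartbeats 2000000 in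
/-- Necessity for pure states: perfect distinguishability in SEP implies `α1 + α2 ≥ 1`. -/
theorem necessity_pure (α1 α2 β1 β2 : ℝ)
    (hα1 : α1 ∈ Set.Icc (0:ℝ) 1) (hα2 : α2 ∈ Set.Icc (0:ℝ) 1)
    (hβ1 : 0 ≤ β1) (hβ2 : 0 ≤ β2)
    (hβ1' : β1 ^ 2 ≤ α1 * (1 - α1)) (hβ2' : β2 ^ 2 ≤ α2 * (1 - α2))
    (h : PerfDistSEP
      ((!![(1:ℂ), 0; 0, 0]) ⊗ₖ (!![(1:ℂ), 0; 0, 0]))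
      ((!![((1 - α1 : ℝ) : ℂ), (β1 : ℝ); (β1 : ℝ), (α1 : ℝ)]) ⊗ₖ
        (!![((1 - α2 : ℝ) : ℂ), (β2 : ℝ); (β2 : ℝ), (α2 : ℝ)]))) :
    1 ≤ α1 + α2 := by
  obtain ⟨M1, M2, h1, h2, hsum, e11, e22, e21, e12⟩ := h
  have hM2 : M2 = 1 - M1 := eq_sub_of_add_eq' hsum
  subst hM2
  have hσ2 : (!![((1 - α2 : ℝ) : ℂ), (β2 : ℝ); (β2 : ℝ), (α2 : ℝ)]).PosSemidef :=
    sigma_psd α2 β2 hα2.1 hα2.2 hβ2'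
  -- hermitian entry relations
  have hre : ∀ p q, (M1 p q).re = (M1 q p).re := by
    intro p q
    rw [← h1.1.apply q p]
    simp [Complex.star_def]
  have him : ∀ p q, (M1 p q).im = -(M1 q p).im := by
    intro p q
    rw [← h1.1.apply q p]
    simp [Complex.star_def]
  -- F1 : corner entry is 1
  have F1 : M1 0 0 = 1 := by
    simpa [Matrix.trace, Matrix.diag, Matrix.mul_apply, Fintype.sum_prod_type,
      Fin.sum_univ_two, Matrix.kroneckerMap_apply] using e11
  -- F2
  have F2 := h1.2 (outer ![1,0]) (outer ![0,1]) (outer_psd _) (outer_psd _)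
  rw [Complex.le_def] at F2
  obtain ⟨F2re, F2im⟩ := F2
  simp [Matrix.trace, Matrix.diag, Matrix.mul_apply, Fintype.sum_prod_type,
      Fin.sum_univ_two, Matrix.kroneckerMap_apply, outer] at F2re F2im
  -- F3 : off-diagonal corner vanishes
  have F3 := h2.2 (outer ![1,0]) (outer ![1, (((M1 0 (0,1)).re : ℝ) : ℂ) - ((M1 0 (0,1)).im : ℝ) * Complex.I]) (outer_psd _) (outer_psd _)
  rw [Complex.le_def] at F3
  obtain ⟨F3re, -⟩ := F3
  simp [Matrix.trace, Matrix.diag, Matrix.mul_apply, Fintype.sum_prod_type,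
      Fin.sum_univ_two, Matrix.kroneckerMap_apply, outer, Matrix.one_apply, Matrix.sub_apply, Prod.ext_iff,
      Complex.sub_re, Complex.sub_im, Complex.add_re, Complex.add_im, Complex.mul_re, Complex.mul_im] at F3re
  have F1re : (M1 0 0).re = 1 := by rw [F1]; simp
  rw [hre (0,1) 0, him (0,1) 0] at F3re
  have hk2 : (M1 0 (0,1)).re ^ 2 + (M1 0 (0,1)).im ^ 2 ≤ 0 := by nlinarith [F3re, F2re, F1re]
  have F3r : (M1 0 (0,1)).re = 0 := by nlinarith [hk2, sq_nonneg ((M1 0 (0,1)).re), sq_nonneg ((M1 0 (0,1)).im)]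
  have F3i : (M1 0 (0,1)).im = 0 := by nlinarith [hk2, sq_nonneg ((M1 0 (0,1)).re), sq_nonneg ((M1 0 (0,1)).im)]
  have F1im : (M1 0 0).im = 0 := by rw [F1]; simp
  have G3 : (M1 (0,1) 0).re = 0 := by rw [hre (0,1) 0]; exact F3r
  have G4 : (M1 (0,1) 0).im = 0 := by rw [him (0,1) 0, F3i]; ring
  -- named quantities
  obtain ⟨X, hX⟩ : ∃ X : ℝ, X = (1 - α2) + α2 * (M1 (0,1) (0,1)).re := ⟨_, rfl⟩
  obtain ⟨Y, hY⟩ : ∃ Y : ℝ, Y = (1-α2) * (M1 (1,0) (1,0)).re + 2*β2*(M1 1 (1,0)).re + α2*(M1 1 1).re := ⟨_, rfl⟩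
  obtain ⟨R, hR⟩ : ∃ R : ℝ, R = (1-α2)*(M1 (1,0) 0).re + β2*(M1 1 0).re + β2*(M1 (1,0) (0,1)).re + α2*(M1 1 (0,1)).re := ⟨_, rfl⟩
  obtain ⟨I, hI⟩ : ∃ I : ℝ, I = (1-α2)*(M1 (1,0) 0).im + β2*(M1 1 0).im + β2*(M1 (1,0) (0,1)).im + α2*(M1 1 (0,1)).im := ⟨_, rfl⟩
  have hXb : 1 - α2 ≤ X := by rw [hX]; nlinarith [F2re, hα2.1]
  -- x bounds
  have hx0 : 0 ≤ X := by
    have inst := h1.2 (outer ![1,0]) _ (outer_psd _) hσ2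
    rw [Complex.le_def] at inst
    obtain ⟨ir, -⟩ := inst
    simp [Matrix.trace, Matrix.diag, Matrix.mul_apply, Fintype.sum_prod_type,
      Fin.sum_univ_two, Matrix.kroneckerMap_apply, outer, Matrix.one_apply, Matrix.sub_apply, Prod.ext_iff,
      Complex.sub_re, Complex.sub_im, Complex.add_re, Complex.add_im, Complex.mul_re, Complex.mul_im,
      Complex.ofReal_re, Complex.ofReal_im, Complex.I_re, Complex.I_im] at ir
    simp only [F1re, F1im, F3r, F3i, G3, G4,
      hre 0 (1,0), him 0 (1,0), hre 0 1, him 0 1, hre (0,1) (1,0), him (0,1) (1,0),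
      hre (0,1) 1, him (0,1) 1, hre (1,0) 1, him (1,0) 1] at ir
    rw [hX]; linarith [ir]
  have hx1 : X ≤ 1 := by
    have inst := h2.2 (outer ![1,0]) _ (outer_psd _) hσ2
    rw [Complex.le_def] at inst
    obtain ⟨ir, -⟩ := inst
    simp [Matrix.trace, Matrix.diag, Matrix.mul_apply, Fintype.sum_prod_type,
      Fin.sum_univ_two, Matrix.kroneckerMap_apply, outer, Matrix.one_apply, Matrix.sub_apply, Prod.ext_iff,
      Complex.sub_re, Complex.sub_im, Complex.add_re, Complex.add_im, Complex.mul_re, Complex.mul_im,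
      Complex.ofReal_re, Complex.ofReal_im, Complex.I_re, Complex.I_im] at ir
    simp only [F1re, F1im, F3r, F3i, G3, G4,
      hre 0 (1,0), him 0 (1,0), hre 0 1, him 0 1, hre (0,1) (1,0), him (0,1) (1,0),
      hre (0,1) 1, him (0,1) 1, hre (1,0) 1, him (1,0) 1] at ir
    rw [hX]; linarith [ir]
  have hy0 : 0 ≤ Y := by
    have inst := h1.2 (outer ![0,1]) _ (outer_psd _) hσ2
    rw [Complex.le_def] at inst
    obtain ⟨ir, -⟩ := inst
    simp [Matrix.trace, Matrix.diag, Matrix.mul_apply, Fintype.sum_prod_type,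
      Fin.sum_univ_two, Matrix.kroneckerMap_apply, outer, Matrix.one_apply, Matrix.sub_apply, Prod.ext_iff,
      Complex.sub_re, Complex.sub_im, Complex.add_re, Complex.add_im, Complex.mul_re, Complex.mul_im,
      Complex.ofReal_re, Complex.ofReal_im, Complex.I_re, Complex.I_im] at ir
    simp only [F1re, F1im, F3r, F3i, G3, G4,
      hre 0 (1,0), him 0 (1,0), hre 0 1, him 0 1, hre (0,1) (1,0), him (0,1) (1,0),
      hre (0,1) 1, him (0,1) 1, hre (1,0) 1, him (1,0) 1] at ir
    rw [hY]; linarith [ir]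
  have hy1 : Y ≤ 1 := by
    have inst := h2.2 (outer ![0,1]) _ (outer_psd _) hσ2
    rw [Complex.le_def] at inst
    obtain ⟨ir, -⟩ := inst
    simp [Matrix.trace, Matrix.diag, Matrix.mul_apply, Fintype.sum_prod_type,
      Fin.sum_univ_two, Matrix.kroneckerMap_apply, outer, Matrix.one_apply, Matrix.sub_apply, Prod.ext_iff,
      Complex.sub_re, Complex.sub_im, Complex.add_re, Complex.add_im, Complex.mul_re, Complex.mul_im,
      Complex.ofReal_re, Complex.ofReal_im, Complex.I_re, Complex.I_im] at ir
    simp only [F1re, F1im, F3r, F3i, G3, G4,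
      hre 0 (1,0), him 0 (1,0), hre 0 1, him 0 1, hre (0,1) (1,0), him (0,1) (1,0),
      hre (0,1) 1, him (0,1) 1, hre (1,0) 1, him (1,0) 1] at ir
    rw [hY]; linarith [ir]
  -- key quadratic families
  have key1 : ∀ s : ℝ, 0 ≤ X - 2*s*(R^2 + I^2) + s^2*(R^2 + I^2)*Y := by
    intro s
    have inst := h1.2 (outer ![1, (↑(-(s*R)) + ↑(-(s*I)) * Complex.I)]) _ (outer_psd _) hσ2
    rw [Complex.le_def] at inst
    obtain ⟨ir, -⟩ := inst
    simp [Matrix.trace, Matrix.diag, Matrix.mul_apply, Fintype.sum_prod_type,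
      Fin.sum_univ_two, Matrix.kroneckerMap_apply, outer, Matrix.one_apply, Matrix.sub_apply, Prod.ext_iff,
      Complex.sub_re, Complex.sub_im, Complex.add_re, Complex.add_im, Complex.mul_re, Complex.mul_im,
      Complex.ofReal_re, Complex.ofReal_im, Complex.I_re, Complex.I_im] at ir
    simp only [F1re, F1im, F3r, F3i, G3, G4,
      hre 0 (1,0), him 0 (1,0), hre 0 1, him 0 1, hre (0,1) (1,0), him (0,1) (1,0),
      hre (0,1) 1, him (0,1) 1, hre (1,0) 1, him (1,0) 1] at ir
    have hR2 := congrArg (fun z => 2*s*R*z) hR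
    have hI2 := congrArg (fun z => 2*s*I*z) hI
    have hY2 := congrArg (fun z => s^2*(R^2+I^2)*z) hY
    rw [hX]
    linarith [ir, hR2, hI2, hY2]
  have key2 : ∀ s : ℝ, 0 ≤ (1-X) - 2*s*(R^2 + I^2) + s^2*(R^2 + I^2)*(1-Y) := by
    intro s
    have inst := h2.2 (outer ![1, (↑(s*R) + ↑(s*I) * Complex.I)]) _ (outer_psd _) hσ2
    rw [Complex.le_def] at inst
    obtain ⟨ir, -⟩ := inst
    simp [Matrix.trace, Matrix.diag, Matrix.mul_apply, Fintype.sum_prod_type,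
      Fin.sum_univ_two, Matrix.kroneckerMap_apply, outer, Matrix.one_apply, Matrix.sub_apply, Prod.ext_iff,
      Complex.sub_re, Complex.sub_im, Complex.add_re, Complex.add_im, Complex.mul_re, Complex.mul_im,
      Complex.ofReal_re, Complex.ofReal_im, Complex.I_re, Complex.I_im] at ir
    simp only [F1re, F1im, F3r, F3i, G3, G4,
      hre 0 (1,0), him 0 (1,0), hre 0 1, him 0 1, hre (0,1) (1,0), him (0,1) (1,0),
      hre (0,1) 1, him (0,1) 1, hre (1,0) 1, him (1,0) 1] at ir
    have hR2 := congrArg (fun z => 2*s*R*z) hR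
    have hI2 := congrArg (fun z => 2*s*I*z) hI
    have hY2 := congrArg (fun z => s^2*(R^2+I^2)*z) hY
    rw [hX]
    linarith [ir, hR2, hI2, hY2]
  -- trace equation with rho2
  have heq : (1-α1)*X + 2*β1*R + α1*Y = 0 := by
    have inst := congrArg Complex.re e12
    simp [Matrix.trace, Matrix.diag, Matrix.mul_apply, Fintype.sum_prod_type,
      Fin.sum_univ_two, Matrix.kroneckerMap_apply, outer, Matrix.one_apply, Matrix.sub_apply, Prod.ext_iff,
      Complex.sub_re, Complex.sub_im, Complex.add_re, Complex.add_im, Complex.mul_re, Complex.mul_im,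
      Complex.ofReal_re, Complex.ofReal_im, Complex.I_re, Complex.I_im] at inst
    simp only [F1re, F1im, F3r, F3i, G3, G4,
      hre 0 (1,0), him 0 (1,0), hre 0 1, him 0 1, hre (0,1) (1,0), him (0,1) (1,0),
      hre (0,1) 1, him (0,1) 1, hre (1,0) 1, him (1,0) 1] at inst
    rw [hX, hY, hR]
    linarith [inst]
  -- conclude
  have hcxy : R^2 + I^2 ≤ X * Y := quad_aux (by positivity) hy0 key1
  have hcxy' : R^2 + I^2 ≤ (1 - X) * (1 - Y) := quad_aux (by positivity) (by linarith) key2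
  clear hre him F1 F2re F2im F3re F1re F1im hk2 F3r F3i G3 G4 hX hY hR hI
  clear e11 e12 e21 e22 hsum h1 h2 hσ2 key1 key2 M1
  have hr2 : R^2 ≤ R^2 + I^2 := by nlinarith [sq_nonneg I]
  have t1 : (1-α1)*X + α1*Y = -(2*β1*R) := by linarith
  have s1 : ((1-α1)*X + α1*Y)^2 = 4*β1^2*R^2 := by rw [t1]; ring
  have haa : 0 ≤ α1 * (1-α1) := le_trans (sq_nonneg β1) hβ1'
  have s2 : 4*β1^2*R^2 ≤ 4*(α1*(1-α1))*(X*Y) := by nlinarith [sq_nonneg R, hβ1', haa, hcxy, hr2, mul_nonneg hx0 hy0]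
  have hd : ((1-α1)*X - α1*Y)^2 ≤ 0 := by nlinarith [s1, s2]
  have hd0 : ((1-α1)*X - α1*Y)^2 = 0 := le_antisymm hd (sq_nonneg _)
  have s4 : (1-α1)*X = α1*Y := by
    have := pow_eq_zero_iff (n := 2) (by norm_num) |>.mp hd0
    linarith [this]
  have s5 : 4*β1^2*R^2 ≤ 4*(α1*(1-α1))*((1-X)*(1-Y)) := by
    nlinarith [hβ1', haa, hcxy', hr2, mul_nonneg (by linarith : (0:ℝ) ≤ 1-X) (by linarith : (0:ℝ) ≤ 1-Y)]
  have s6 : 4*((1-α1)*X)^2 ≤ 4*(α1*(1-α1))*((1-X)*(1-Y)) := by nlinarith [s1, s4, s5]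
  have s7 : α1*(1-α1)*((1-X)*(1-Y)) = (1-α1)*(1-X)*(α1-(1-α1)*X) := by linear_combination ((1-α1)*(1-X))*s4
  have s8 : ((1-α1)*X)^2 ≤ (1-α1)*(1-X)*(α1-(1-α1)*X) := by nlinarith [s6, s7]
  have hkey : (1-α1)*(X - α1) ≤ 0 := by nlinarith [s8]
  nlinarith [hkey, hXb, hα1.2, hα2.1, hx1]
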